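/- Let 𝔛 = (X, {R_i}_{i=0}^d) be a symmetric association scheme whose eigenvalues θ₀, …, θ_d of A₁ are pairwise distinct. Suppose there exists l ∈ {0,1,…,d} such that for each i ∈ {1,…,d}, ∏_{j=1, j≠i}^d (θ₀ − θ_j)/(θ_i − θ_j) = − Q_i(l). Then A₁^h ∘ A_l = 0 for every h with 0 ≤ h ≤ d−1. -/

import Mathlib

open Matrix BigOperators

/-- A symmetric association scheme of class `d` on a finite set `X`, bundled with
its adjacency matrices `A i`, primitive idempotents `E i`, and first and second
eigenmatrices `P`, `Q` (with `P i j = P_i(j)`, `Q i j = Q_i(j)`). -/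
structure AssocScheme (X : Type*) [Fintype X] [DecidableEq X] (d : ℕ) where
  A : Fin (d + 1) → Matrix X X ℝ
  E : Fin (d + 1) → Matrix X X ℝ
  P : Fin (d + 1) → Fin (d + 1) → ℝ
  Q : Fin (d + 1) → Fin (d + 1) → ℝ
  A_entries : ∀ i x y, A i x y = 0 ∨ A i x y = 1
  A_zero : A 0 = 1
  A_ne : ∀ i, A i ≠ 0
  A_sum : ∑ i, A i = Matrix.of fun _ _ => (1 : ℝ)
  A_symm : ∀ i, (A i)ᵀ = A i
  A_mul : ∀ i j, ∃ p : Fin (d + 1) → ℝ, A i * A j = ∑ k, p k • A k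
  E_zero : E 0 = ((Fintype.card X : ℝ))⁻¹ • Matrix.of fun _ _ => (1 : ℝ)
  E_sum : ∑ i, E i = 1
  E_mul : ∀ i j, E i * E j = if i = j then E i else 0
  E_symm : ∀ i, (E i)ᵀ = E i
  A_eq : ∀ i, A i = ∑ j, P i j • E j
  E_eq : ∀ i, E i = ((Fintype.card X : ℝ))⁻¹ • ∑ j, Q i j • A j

namespace AssocScheme

variable {V : Type*} [Fintype V] [DecidableEq V] {d : ℕ} (S : AssocScheme V d)

/-- The eigenvalues `θ_j = P_1(j)` of the first adjacency matrix. -/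
def theta (j : Fin (d + 1)) : ℝ := S.P 1 j

/-- `A j` appears in `M` if `M ∘ A j = α • A j` for some nonzero `α`. -/
def Appears (M : Matrix V V ℝ) (j : Fin (d + 1)) : Prop :=
  ∃ α : ℝ, α ≠ 0 ∧ Matrix.hadamard M (S.A j) = α • S.A j

/-- `N*_h`: indices `j` such that `A j` appears in `A₁^h` but in no lower power. -/
def Nstar (h : ℕ) : Set (Fin (d + 1)) :=
  {j | S.Appears (S.A 1 ^ h) j ∧ ∀ l < h, ¬ S.Appears (S.A 1 ^ l) j}

/-- `S` is a P-polynomial scheme with respect to `A 1`: there is an ordering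
`A 0, A 1, A (ξ 2), …, A (ξ d)` and polynomials `v i` of degree `i` with
`v i (A 1) = A (ξ i)`. -/
def IsPPolyWrtA1 : Prop :=
  ∃ ξ : Equiv.Perm (Fin (d + 1)), ξ 0 = 0 ∧ ξ 1 = 1 ∧
    ∃ v : Fin (d + 1) → Polynomial ℝ,
      ∀ i, (v i).natDegree = (i : ℕ) ∧ Polynomial.aeval (S.A 1) (v i) = S.A (ξ i)

-- entrywise disjointness of the A_j
lemma A_disjoint {j k : Fin (d + 1)} (hjk : j ≠ k) (x y : V) :
    S.A j x y * S.A k x y = 0 := by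
  have hsum : (∑ i, S.A i x y) = 1 := by
    have := congrArg (fun M => M x y) S.A_sum
    simpa [Matrix.sum_apply] using this
  rcases S.A_entries j x y with hj | hj
  · rw [hj, zero_mul]
  rcases S.A_entries k x y with hk | hk
  · rw [hk, mul_zero]
  exfalso
  have hle : S.A j x y + S.A k x y ≤ ∑ i, S.A i x y := by
    refine Finset.add_le_sum (f := fun i => S.A i x y) ?_ (Finset.mem_univ j)
      (Finset.mem_univ k) hjk
    intro i _
    rcases S.A_entries i x y with h | h <;> simp [h]
  rw [hj, hk, hsum] at hle; linarith

lemma hadamard_comb (c : Fin (d + 1) → ℝ) (l : Fin (d + 1)) :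
    Matrix.hadamard (∑ j, c j • S.A j) (S.A l) = c l • S.A l := by
  ext x y
  simp only [Matrix.hadamard_apply, Matrix.sum_apply, Matrix.smul_apply, smul_eq_mul,
    Finset.sum_mul]
  rw [Finset.sum_eq_single l]
  · rcases S.A_entries l x y with h | h <;> simp [h]
  · intro j _ hj
    rw [mul_assoc, S.A_disjoint hj, mul_zero]
  · simp

lemma pow_A1 (h : ℕ) : S.A 1 ^ h = ∑ j, (S.theta j) ^ h • S.E j := by
  induction h with
  | zero => simp [S.E_sum]
  | succ n ih =>
    rw [pow_succ, ih, S.A_eq 1, Finset.sum_mul]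
    simp only [Finset.mul_sum, smul_mul_assoc, mul_smul_comm, S.E_mul, smul_smul, smul_ite,
      smul_zero, Finset.sum_ite_eq, Finset.mem_univ, if_true]
    refine Finset.sum_congr rfl fun j _ => ?_
    simp [theta, pow_succ, mul_comm]

include S in
lemma card_pos : 0 < Fintype.card V := by
  rcases isEmpty_or_nonempty V with h | h
  · exact absurd (Matrix.ext fun x _ => isEmptyElim x) (S.A_ne 0)
  · exact Fintype.card_pos

lemma Q_zero (l : Fin (d + 1)) : S.Q 0 l = 1 := by
  have h1 : Matrix.hadamard (S.E 0) (S.A l) = ((Fintype.card V : ℝ))⁻¹ • S.A l := by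
    rw [S.E_zero, Matrix.smul_hadamard]
    congr 1
    ext x y
    rcases S.A_entries l x y with h | h <;> simp [Matrix.hadamard_apply, h]
  have h2 : Matrix.hadamard (S.E 0) (S.A l)
      = ((Fintype.card V : ℝ))⁻¹ • (S.Q 0 l • S.A l) := by
    rw [S.E_eq 0, Matrix.smul_hadamard, S.hadamard_comb]
  have hn : ((Fintype.card V : ℝ))⁻¹ ≠ 0 := by
    exact inv_ne_zero (Nat.cast_pos.mpr S.card_pos).ne'
  have h3 : S.A l = S.Q 0 l • S.A l :=
    smul_right_injective (Matrix V V ℝ) hn (h1.symm.trans h2)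
  have hz : (1 - S.Q 0 l) • S.A l = 0 := by
    calc (1 - S.Q 0 l) • S.A l = S.A l - S.Q 0 l • S.A l := by rw [sub_smul, one_smul]
    _ = 0 := by nth_rewrite 1 [h3]; rw [sub_self]
  rcases smul_eq_zero.mp hz with h' | h'
  · linarith [sub_eq_zero.mp (by linarith [h'] : (1:ℝ) - S.Q 0 l = 0)]
  · exact absurd h' (S.A_ne l)

end AssocScheme

/-- If the eigenvalues of `A 1` are pairwise distinct and `l` satisfies
`∏_{j≠i}(θ₀−θ_j)/(θ_i−θ_j) = −Q_i(l)` for all `i ∈ {1,…,d}`, then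
`A₁^h ∘ A_l = 0` for every `h ≤ d−1`. -/
theorem stmt6 {V : Type*} [Fintype V] [DecidableEq V] {d : ℕ} (S : AssocScheme V d)
    (hd : 1 ≤ d) (hθ : Function.Injective S.theta)
    (l : Fin (d + 1))
    (hl : ∀ i : Fin (d + 1), i ≠ 0 →
      (∏ j ∈ (Finset.univ.erase 0).erase i,
        (S.theta 0 - S.theta j) / (S.theta i - S.theta j)) = - S.Q i l) :
    ∀ h : ℕ, h < d → Matrix.hadamard (S.A 1 ^ h) (S.A l) = 0 := by
  intro h hh
  classical
  set n : ℝ := (Fintype.card V : ℝ) with hn_def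
  set s := (Finset.univ : Finset (Fin (d + 1))).erase 0 with hs_def
  -- the key scalar identity
  have key : ∑ j, S.theta j ^ h * S.Q j l = 0 := by
    have hs : s.card = d := by
      rw [hs_def, Finset.card_erase_of_mem (Finset.mem_univ 0), Finset.card_univ,
        Fintype.card_fin]
      omega
    have hvs : Set.InjOn S.theta s := Function.Injective.injOn hθ
    have hdeg : ((Polynomial.X : Polynomial ℝ) ^ h).degree < s.card := by
      rw [Polynomial.degree_X_pow, hs]; exact_mod_cast hh
    have hint := Lagrange.eq_interpolate hvs hdeg
    have heval := congrArg (Polynomial.eval (S.theta 0)) hint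
    rw [Lagrange.interpolate_apply] at heval
    simp only [Polynomial.eval_pow, Polynomial.eval_X, Polynomial.eval_finset_sum,
      Polynomial.eval_mul, Polynomial.eval_C] at heval
    have hbasis : ∀ i ∈ s, Polynomial.eval (S.theta 0) (Lagrange.basis s S.theta i)
        = ∏ j ∈ s.erase i, (S.theta 0 - S.theta j) / (S.theta i - S.theta j) := by
      intro i hi
      rw [Lagrange.basis, Polynomial.eval_prod]
      refine Finset.prod_congr rfl fun j hj => ?_
      rw [Lagrange.basisDivisor]
      simp [div_eq_mul_inv, mul_comm]
    have hrest : ∑ j ∈ s, S.theta j ^ h * S.Q j l = - S.theta 0 ^ h := by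
      have h1 : ∀ j ∈ s, S.theta j ^ h * S.Q j l
          = -(S.theta j ^ h * Polynomial.eval (S.theta 0) (Lagrange.basis s S.theta j)) := by
        intro j hj
        have hj0 : j ≠ 0 := (Finset.mem_erase.mp hj).1
        rw [hbasis j hj, hl j hj0]
        ring
      rw [Finset.sum_congr rfl h1, Finset.sum_neg_distrib, ← heval]
    rw [← Finset.add_sum_erase _ _ (Finset.mem_univ 0), S.Q_zero l, mul_one, ← hs_def, hrest]
    ring
  rw [S.pow_A1 h]
  have hE : (∑ j, S.theta j ^ h • S.E j)
      = ∑ k, (n⁻¹ * ∑ j, S.theta j ^ h * S.Q j k) • S.A k := by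
    simp only [S.E_eq, Finset.smul_sum, smul_smul]
    rw [Finset.sum_comm]
    refine Finset.sum_congr rfl fun k _ => ?_
    rw [← Finset.sum_smul]
    congr 1
    rw [Finset.mul_sum]
    exact Finset.sum_congr rfl fun j _ => by ring
  rw [hE, S.hadamard_comb, key, mul_zero, zero_smul]
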